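/- Let X be a real Banach space. If A ⊂ X × X* is maximal self-cancelling, then A^⊢ is maximal monotone or −A^⊢ is maximal monotone, where −A^⊢ = {(x, −x*) : (x, x*) ∈ A^⊢}. -/

import Mathlib

/-- A subset of `X × X*` is monotone if `⟨x - y, x* - y*⟩ ≥ 0` for all its pairs of points. -/
def IsMonotoneSet {X : Type*} [NormedAddCommGroup X] [NormedSpace ℝ X]
    (T : Set (X × (X →L[ℝ] ℝ))) : Prop :=
  ∀ p ∈ T, ∀ q ∈ T, 0 ≤ (p.2 - q.2) (p.1 - q.1)

/-- A subset of `X × X*` is maximal monotone if it is monotone and maximal with respect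
to inclusion among monotone subsets. -/
def IsMaximalMonotone {X : Type*} [NormedAddCommGroup X] [NormedSpace ℝ X]
    (T : Set (X × (X →L[ℝ] ℝ))) : Prop :=
  IsMonotoneSet T ∧ ∀ S, IsMonotoneSet S → T ⊆ S → S = T

/-- `B^⊢ = {(y, y*) : ⟨x, y*⟩ + ⟨y, x*⟩ = 0 for all (x, x*) ∈ B}`. -/
def vdash {X : Type*} [NormedAddCommGroup X] [NormedSpace ℝ X]
    (B : Set (X × (X →L[ℝ] ℝ))) : Set (X × (X →L[ℝ] ℝ)) :=
  {q | ∀ p ∈ B, p.2 q.1 + q.2 p.1 = 0}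

/-- `-B = {(x, -x*) : (x, x*) ∈ B}`. -/
def negOp {X : Type*} [NormedAddCommGroup X] [NormedSpace ℝ X]
    (B : Set (X × (X →L[ℝ] ℝ))) : Set (X × (X →L[ℝ] ℝ)) :=
  (fun p => (p.1, -p.2)) '' B

/-- `A ⊆ X × X*` is self-cancelling if it is a linear subspace of `X × X*` and the
duality product vanishes on it. -/
def IsSelfCancelling {X : Type*} [NormedAddCommGroup X] [NormedSpace ℝ X]
    (A : Set (X × (X →L[ℝ] ℝ))) : Prop :=
  (∃ S : Submodule ℝ (X × (X →L[ℝ] ℝ)), A = ↑S) ∧ ∀ p ∈ A, p.2 p.1 = 0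

private lemma quad_root (a b c : ℝ) (ha : a < 0) (hc : 0 < c) :
    ∃ t : ℝ, a * t ^ 2 + b * t + c = 0 := by
  have hd : (0:ℝ) ≤ b ^ 2 - 4 * a * c := by nlinarith
  set d := Real.sqrt (b ^ 2 - 4 * a * c) with hdd
  have hdsq : d ^ 2 = b ^ 2 - 4 * a * c := Real.sq_sqrt hd
  set t := (-b + d) / (2 * a) with ht
  have ha0 : a ≠ 0 := ne_of_lt ha
  have h2at : 2 * a * t = -b + d := by rw [ht]; field_simp
  refine ⟨t, ?_⟩
  have key : 4 * a * (a * t ^ 2 + b * t + c)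
      = (2 * a * t) ^ 2 + 2 * b * (2 * a * t) + 4 * a * c := by ring
  rw [h2at] at key
  have key2 : (-b + d) ^ 2 + 2 * b * (-b + d) + 4 * a * c = 0 := by
    linear_combination hdsq
  have : 4 * a * (a * t ^ 2 + b * t + c) = 0 := by rw [key, key2]
  have h4a : (4:ℝ) * a ≠ 0 := by simpa using ha0
  exact (mul_eq_zero.mp this).resolve_left h4a

private lemma linear_cancel (c q : ℝ) (h : ∀ t : ℝ, 0 ≤ q - t * c) : c = 0 := by
  by_contra hc
  have := h ((q + 1) / c)
  rw [div_mul_cancel₀ _ hc] at this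
  linarith

private lemma mem_negOp_iff {X : Type*} [NormedAddCommGroup X] [NormedSpace ℝ X]
    (B : Set (X × (X →L[ℝ] ℝ))) (s : X × (X →L[ℝ] ℝ)) :
    s ∈ negOp B ↔ (s.1, -s.2) ∈ B := by
  constructor
  · rintro ⟨p, hp, rfl⟩; simpa using hp
  · intro h; exact ⟨(s.1, -s.2), h, by simp⟩

/-- If `A ⊆ X × X*` is maximal self-cancelling, then `A^⊢` or `-A^⊢` is maximal
monotone. -/
theorem vdash_or_neg_vdash_maximalMonotone {X : Type*} [NormedAddCommGroup X]
    [NormedSpace ℝ X] [CompleteSpace X] (A : Set (X × (X →L[ℝ] ℝ)))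
    (hA : IsSelfCancelling A)
    (hmaxA : ∀ B, IsSelfCancelling B → A ⊆ B → B = A) :
    IsMaximalMonotone (vdash A) ∨ IsMaximalMonotone (negOp (vdash A)) := by
  obtain ⟨⟨S, hS⟩, hQ0⟩ := hA
  have hAsmul : ∀ (t : ℝ), ∀ p ∈ A, t • p ∈ A := by
    intro t p hp; rw [hS] at hp ⊢; exact S.smul_mem t hp
  have hAadd : ∀ p ∈ A, ∀ q ∈ A, p + q ∈ A := by
    intro p hp q hq; rw [hS] at hp hq ⊢; exact S.add_mem hp hq
  -- A ⊆ vdash A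
  have hAv : A ⊆ vdash A := by
    intro p hp q hq
    have h1 := hQ0 _ (hAadd q hq p hp)
    have h2 := hQ0 _ hq
    have h3 := hQ0 _ hp
    simp only [Prod.fst_add, Prod.snd_add, ContinuousLinearMap.add_apply, map_add] at h1
    linarith
  -- vdash A is closed under the linear operations
  have hVsmul : ∀ (t : ℝ), ∀ p ∈ vdash A, t • p ∈ vdash A := by
    intro t p hp q hq
    have := hp q hq
    simp only [Prod.smul_fst, Prod.smul_snd, ContinuousLinearMap.smul_apply, map_smul,
      smul_eq_mul]
    linear_combination t * this
  have hVadd : ∀ p ∈ vdash A, ∀ q ∈ vdash A, p + q ∈ vdash A := by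
    intro p hp q hq r hr
    have h1 := hp r hr
    have h2 := hq r hr
    simp only [Prod.fst_add, Prod.snd_add, ContinuousLinearMap.add_apply, map_add]
    linarith
  have hVsub : ∀ p ∈ vdash A, ∀ q ∈ vdash A, p - q ∈ vdash A := by
    intro p hp q hq
    have := hVadd p hp _ (hVsmul (-1) q hq)
    have e : -q = (-1:ℝ) • q := by ext <;> simp
    rw [sub_eq_add_neg, e]; exact this
  -- elements of vdash A with vanishing duality product lie in A
  have hzero_mem : ∀ r ∈ vdash A, r.2 r.1 = 0 → r ∈ A := by
    intro r hr hQr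
    set B : Set (X × (X →L[ℝ] ℝ)) := ↑(S ⊔ Submodule.span ℝ {r}) with hB
    have hAB : A ⊆ B := by
      rw [hS]
      exact fun x hx => Submodule.mem_sup_left hx
    have hrB : r ∈ B := Submodule.mem_sup_right (Submodule.mem_span_singleton_self r)
    have hBsc : IsSelfCancelling B := by
      refine ⟨⟨_, rfl⟩, ?_⟩
      intro p hp
      rw [hB, SetLike.mem_coe, Submodule.mem_sup] at hp
      obtain ⟨a, ha, b, hb, rfl⟩ := hp
      obtain ⟨t, rfl⟩ := Submodule.mem_span_singleton.mp hb
      have haA : a ∈ A := by rw [hS]; exact ha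
      have h1 := hQ0 a haA
      have h2 := hr a haA
      simp only [Prod.fst_add, Prod.snd_add, Prod.smul_fst, Prod.smul_snd,
        ContinuousLinearMap.add_apply, map_add, ContinuousLinearMap.smul_apply,
        map_smul, smul_eq_mul]
      linear_combination h1 + t * h2 + t ^ 2 * hQr
    have := hmaxA B hBsc hAB
    rw [← this]; exact hrB
  -- dichotomy: the duality product has constant sign on vdash A
  have hdich : (∀ p ∈ vdash A, 0 ≤ p.2 p.1) ∨ (∀ p ∈ vdash A, p.2 p.1 ≤ 0) := by
    by_contra hcon
    push_neg at hcon
    obtain ⟨⟨p, hp, hpneg⟩, ⟨q, hq, hqpos⟩⟩ := hcon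
    -- p.2 p.1 < 0, q.2 q.1 > 0
    obtain ⟨t, ht⟩ := quad_root (p.2 p.1) (p.2 q.1 + q.2 p.1) (q.2 q.1) hpneg hqpos
    set r := q + t • p with hrdef
    have hrv : r ∈ vdash A := hVadd q hq _ (hVsmul t p hp)
    have hQr : r.2 r.1 = 0 := by
      rw [hrdef]
      simp only [Prod.fst_add, Prod.snd_add, Prod.smul_fst, Prod.smul_snd,
        ContinuousLinearMap.add_apply, map_add, ContinuousLinearMap.smul_apply,
        map_smul, smul_eq_mul]
      linear_combination ht
    have hrA : r ∈ A := hzero_mem r hrv hQr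
    have h1 := hp r hrA
    have h2 := hq r hrA
    rw [hrdef] at h1 h2
    simp only [Prod.fst_add, Prod.snd_add, Prod.smul_fst, Prod.smul_snd,
      ContinuousLinearMap.add_apply, map_add, ContinuousLinearMap.smul_apply,
      map_smul, smul_eq_mul] at h1 h2
    nlinarith [h1, h2, sq_nonneg t]
  rcases hdich with hpos | hneg
  · -- vdash A is maximal monotone
    left
    constructor
    · intro p hp q hq
      have := hpos _ (hVsub p hp q hq)
      simpa using this
    · intro T hT hsub
      refine Set.Subset.antisymm ?_ hsub
      intro s hs a ha
      have key : ∀ t : ℝ, 0 ≤ s.2 s.1 - t * (a.2 s.1 + s.2 a.1) := by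
        intro t
        have hta : t • a ∈ T := hsub (hAv (hAsmul t a ha))
        have := hT s hs _ hta
        have hQa := hQ0 a ha
        simp only [Prod.smul_fst, Prod.smul_snd, ContinuousLinearMap.sub_apply, map_sub,
          ContinuousLinearMap.smul_apply, map_smul, smul_eq_mul] at this
        rw [hQa, mul_zero, sub_zero] at this
        linarith [this, mul_add t (a.2 s.1) (s.2 a.1)]
      have := linear_cancel _ _ key
      linarith [this]
  · -- negOp (vdash A) is maximal monotone
    right
    constructor
    · intro p hp q hq
      rw [mem_negOp_iff] at hp hq
      have := hneg _ (hVsub _ hp _ hq)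
      simp only [Prod.fst_sub, Prod.snd_sub, ContinuousLinearMap.sub_apply, map_sub,
        ContinuousLinearMap.neg_apply, map_neg] at this ⊢
      linarith
    · intro T hT hsub
      refine Set.Subset.antisymm ?_ hsub
      intro s hs
      rw [mem_negOp_iff]
      intro a ha
      have key : ∀ t : ℝ, 0 ≤ s.2 s.1 - t * (s.2 a.1 - a.2 s.1) := by
        intro t
        have htav : t • a ∈ vdash A := hAv (hAsmul t a ha)
        have hta : (( (t • a).1, -(t • a).2) : X × (X →L[ℝ] ℝ)) ∈ T := by
          apply hsub
          rw [mem_negOp_iff]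
          simpa only [neg_neg, Prod.mk.eta] using htav
        have := hT s hs _ hta
        have hQa := hQ0 a ha
        simp only [Prod.smul_fst, Prod.smul_snd, ContinuousLinearMap.sub_apply, map_sub,
          ContinuousLinearMap.smul_apply, map_smul, smul_eq_mul, sub_neg_eq_add,
          ContinuousLinearMap.add_apply, map_add, ContinuousLinearMap.neg_apply,
          map_neg] at this
        rw [hQa, mul_zero, add_zero] at this
        linarith [this, mul_sub t (s.2 a.1) (a.2 s.1)]
      have := linear_cancel _ _ key
      simp only [ContinuousLinearMap.neg_apply]
      linarith [this]
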